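/- Let E, F be Polish spaces, u ↦ ρ^u a measurable kernel from F to probability measures on E, ν a probability measure on F, and define Λ(φ) = ∫_F log ∫_E exp(φ(x,u)) ρ^u(dx) ν(du) for φ ∈ C_b(E×F), and Λ*(λ) = sup_{φ ∈ C_b(E×F)} ( ∫ φ dλ − Λ(φ) ) for probability measures λ on E×F. Then for every probability measure λ on E×F: Λ*(λ) = H(λ | ρ^u × ν) if the second marginal of λ equals ν, and Λ*(λ) = +∞ otherwise. -/

import Mathlib

open MeasureTheory ProbabilityTheory

open Real
open scoped ENNReal NNReal

lemma dv_pointwise (r b : ℝ) (hr : 0 ≤ r) :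
    r * b ≤ r * Real.log r - r + Real.exp b := by
  rcases eq_or_lt_of_le hr with h | h
  · simp [← h]; positivity
  · have h1 : (b - Real.log r) + 1 ≤ Real.exp (b - Real.log r) := Real.add_one_le_exp _
    have h2 : Real.exp (b - Real.log r) = Real.exp b / r := by
      rw [Real.exp_sub, Real.exp_log h]
    have h3 : r * ((b - Real.log r) + 1) ≤ r * (Real.exp b / r) := by
      rw [← h2]; exact mul_le_mul_of_nonneg_left h1 hr
    have h4 : r * (Real.exp b / r) = Real.exp b := by field_simp
    nlinarith [h3, h4]

lemma integrable_of_bdd {α : Type*} [MeasurableSpace α] {mu : Measure α}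
    [IsFiniteMeasure mu] {ψ : α → ℝ} (hm : Measurable ψ) {M : ℝ}
    (hb : ∀ x, |ψ x| ≤ M) : Integrable ψ mu :=
  (integrable_const M).mono' hm.aestronglyMeasurable (Filter.Eventually.of_forall hb)

lemma gibbs_ineq {α : Type*} [MeasurableSpace α] (lam mu : Measure α)
    [IsProbabilityMeasure lam] [IsProbabilityMeasure mu]
    (hac : lam ≪ mu) (hint : Integrable (llr lam mu) lam)
    {ψ : α → ℝ} (hm : Measurable ψ) {M : ℝ} (hb : ∀ x, |ψ x| ≤ M)
    (hexp : ∫ x, Real.exp (ψ x) ∂mu ≤ 1) :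
    ∫ x, ψ x ∂lam ≤ ∫ x, llr lam mu x ∂lam := by
  set r : α → ℝ := fun x => (lam.rnDeriv mu x).toReal with hr
  have hrm : Measurable r := (Measure.measurable_rnDeriv lam mu).ennreal_toReal
  have hψint : Integrable ψ lam := integrable_of_bdd hm hb
  have h1 : ∫ x, r x • ψ x ∂mu = ∫ x, ψ x ∂lam := MeasureTheory.integral_rnDeriv_smul hac
  have h2 : ∫ x, r x • llr lam mu x ∂mu = ∫ x, llr lam mu x ∂lam :=
    MeasureTheory.integral_rnDeriv_smul hac
  have Iψ : Integrable (fun x => r x • ψ x) mu :=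
    (MeasureTheory.integrable_rnDeriv_smul_iff hac).2 hψint
  have Illr : Integrable (fun x => r x • llr lam mu x) mu :=
    (MeasureTheory.integrable_rnDeriv_smul_iff hac).2 hint
  have Ir : Integrable r mu := Measure.integrable_toReal_rnDeriv
  have Iexp : Integrable (fun x => Real.exp (ψ x)) mu := by
    refine integrable_of_bdd (hm.exp) (M := Real.exp M) fun x => ?_
    rw [abs_of_pos (Real.exp_pos _)]
    exact Real.exp_le_exp.2 ((abs_le.1 (hb x)).2)
  have hpt : ∀ x, r x • ψ x ≤ r x • llr lam mu x - r x + Real.exp (ψ x) := by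
    intro x
    have := dv_pointwise (r x) (ψ x) ENNReal.toReal_nonneg
    simpa [smul_eq_mul, llr] using this
  have hmono : ∫ x, r x • ψ x ∂mu
      ≤ ∫ x, (r x • llr lam mu x - r x + Real.exp (ψ x)) ∂mu :=
    integral_mono Iψ ((Illr.sub Ir).add Iexp) hpt
  have hsplit : ∫ x, (r x • llr lam mu x - r x + Real.exp (ψ x)) ∂mu
      = ∫ x, r x • llr lam mu x ∂mu - ∫ x, r x ∂mu + ∫ x, Real.exp (ψ x) ∂mu := by
    have Isub : Integrable (fun x => r x • llr lam mu x - r x) mu := Illr.sub Ir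
    rw [integral_add Isub Iexp, integral_sub Illr Ir]
  have hrint : ∫ x, r x ∂mu = 1 := by
    rw [hr, Measure.integral_toReal_rnDeriv hac]
    simp
  rw [h1, hsplit, h2, hrint] at hmono
  linarith

set_option linter.unusedSectionVars false

lemma clamp_abs_le {t M : ℝ} (hM : 0 ≤ M) : |max (min t M) (-M)| ≤ M := by
  rw [abs_le]
  constructor
  · exact le_max_right _ _
  · exact max_le (min_le_right _ _) (by linarith)

lemma clamp_sub_le (a b M : ℝ) :
    |max (min a M) (-M) - max (min b M) (-M)| ≤ |a - b| := by
  calc |max (min a M) (-M) - max (min b M) (-M)| ≤ |min a M - min b M| :=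
    abs_max_sub_max_le_abs _ _ _
  _ ≤ max |a - b| |M - M| := abs_min_sub_min_le_max _ _ _ _
  _ = |a - b| := by simp [abs_nonneg]

lemma clamp_self {t M : ℝ} (h : |t| ≤ M) : max (min t M) (-M) = t := by
  rcases abs_le.1 h with ⟨h1, h2⟩
  rw [min_eq_left h2, max_eq_left h1]

section LowerAbstract

variable {α : Type*} [MeasurableSpace α] (lam mu : Measure α)
  [IsProbabilityMeasure lam] [IsProbabilityMeasure mu]

/-- Truncated version of the log-likelihood ratio, set to `-n` where the density vanishes. -/
noncomputable def gseq (n : ℕ) : α → ℝ := fun x =>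
  if lam.rnDeriv mu x = 0 then -(n : ℝ)
  else max (min (llr lam mu x) n) (-(n : ℝ))

lemma gseq_measurable (n : ℕ) : Measurable (gseq lam mu n) := by
  refine Measurable.ite (Measure.measurable_rnDeriv lam mu (measurableSet_singleton 0))
    measurable_const ?_
  exact ((measurable_llr _ _).min measurable_const).max measurable_const

lemma gseq_abs_le (n : ℕ) (x : α) : |gseq lam mu n x| ≤ (n : ℝ) := by
  rw [gseq]
  split_ifs
  · simp
  · exact clamp_abs_le (Nat.cast_nonneg n)

lemma clamp_abs_le_abs {t c : ℝ} (hc : 0 ≤ c) : |max (min t c) (-c)| ≤ |t| := by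
  rw [abs_le]
  constructor
  · have h1 : -|t| ≤ min t c := le_min ((neg_abs_le t)) (le_trans (by linarith [abs_nonneg t]) hc)
    exact le_trans h1 (le_max_left _ _)
  · exact max_le (le_trans (min_le_left _ _) (le_abs_self _))
      (le_trans (by linarith [abs_nonneg t]) (abs_nonneg t))

lemma gseq_ae_eq (hac : lam ≪ mu) (n : ℕ) :
    gseq lam mu n =ᵐ[lam] fun x => max (min (llr lam mu x) n) (-(n : ℝ)) := by
  filter_upwards [Measure.rnDeriv_pos hac] with x hx
  rw [gseq, if_neg hx.ne']

lemma gseq_exp_le (n : ℕ) :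
    ∀ᵐ x ∂mu, Real.exp (gseq lam mu n x) ≤ (lam.rnDeriv mu x).toReal + 1 := by
  filter_upwards [Measure.rnDeriv_lt_top lam mu] with x hx
  set r := (lam.rnDeriv mu x).toReal with hr
  have hr0 : 0 ≤ r := ENNReal.toReal_nonneg
  rw [gseq]
  split_ifs with h
  · have : Real.exp (-(n:ℝ)) ≤ 1 := Real.exp_le_one_iff.2 (by simp)
    linarith
  · have hrpos : 0 < r := ENNReal.toReal_pos h hx.ne
    rcases le_total (-(n:ℝ)) (llr lam mu x) with h1 | h1
    · have h2 : max (min (llr lam mu x) n) (-(n:ℝ)) ≤ llr lam mu x :=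
        max_le (min_le_left _ _) h1
      have h3 : Real.exp (llr lam mu x) = r := by
        rw [llr, Real.exp_log hrpos]
      have := Real.exp_le_exp.2 h2
      rw [h3] at this
      linarith
    · have h2 : max (min (llr lam mu x) n) (-(n:ℝ)) = -(n:ℝ) := by
        rw [max_eq_right]
        exact le_trans (min_le_left _ _) h1
      rw [h2]
      have : Real.exp (-(n:ℝ)) ≤ 1 := Real.exp_le_one_iff.2 (by simp)
      linarith

lemma gseq_exp_integral_le (hac : lam ≪ mu) (n : ℕ) :
    ∫ x, Real.exp (gseq lam mu n x) ∂mu ≤ 2 := by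
  have hint : Integrable (fun x => Real.exp (gseq lam mu n x)) mu := by
    refine integrable_of_bdd (gseq_measurable lam mu n).exp (M := Real.exp n) fun x => ?_
    rw [abs_of_pos (Real.exp_pos _)]
    exact Real.exp_le_exp.2 (abs_le.1 (gseq_abs_le lam mu n x)).2
  have hr_int : Integrable (fun x => (lam.rnDeriv mu x).toReal + 1) mu :=
    (Measure.integrable_toReal_rnDeriv).add (integrable_const 1)
  have h1 : ∫ x, Real.exp (gseq lam mu n x) ∂mu
      ≤ ∫ x, ((lam.rnDeriv mu x).toReal + 1) ∂mu :=
    integral_mono_ae hint hr_int (gseq_exp_le lam mu n)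
  have h2 : ∫ x, ((lam.rnDeriv mu x).toReal + 1) ∂mu = 1 + 1 := by
    rw [integral_add (Measure.integrable_toReal_rnDeriv) (integrable_const 1),
      Measure.integral_toReal_rnDeriv hac]
    simp
  linarith

lemma gseq_exp_integral_pos (n : ℕ) :
    Real.exp (-(n:ℝ)) ≤ ∫ x, Real.exp (gseq lam mu n x) ∂mu := by
  have hint : Integrable (fun x => Real.exp (gseq lam mu n x)) mu := by
    refine integrable_of_bdd (gseq_measurable lam mu n).exp (M := Real.exp n) fun x => ?_
    rw [abs_of_pos (Real.exp_pos _)]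
    exact Real.exp_le_exp.2 (abs_le.1 (gseq_abs_le lam mu n x)).2
  have := integral_mono (integrable_const (Real.exp (-(n:ℝ)))) hint
    (fun x => Real.exp_le_exp.2 (abs_le.1 (gseq_abs_le lam mu n x)).1)
  simpa using this

lemma gseq_integral_tendsto (hac : lam ≪ mu) (hint : Integrable (llr lam mu) lam) :
    Filter.Tendsto (fun n => ∫ x, gseq lam mu n x ∂lam) Filter.atTop
      (nhds (∫ x, llr lam mu x ∂lam)) := by
  refine tendsto_integral_of_dominated_convergence (fun x => |llr lam mu x|)
    (fun n => (gseq_measurable lam mu n).aestronglyMeasurable) hint.abs ?_ ?_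
  · intro n
    filter_upwards [gseq_ae_eq lam mu hac n] with x hx
    rw [Real.norm_eq_abs, hx]
    exact clamp_abs_le_abs (Nat.cast_nonneg n)
  · have hall : ∀ᵐ x ∂lam, ∀ n : ℕ,
        gseq lam mu n x = max (min (llr lam mu x) n) (-(n : ℝ)) :=
      MeasureTheory.ae_all_iff.2 fun n => gseq_ae_eq lam mu hac n
    filter_upwards [hall] with x hx
    have hev : ∀ᶠ n in Filter.atTop, llr lam mu x = gseq lam mu n x := by
      rw [Filter.eventually_atTop]
      refine ⟨⌈|llr lam mu x|⌉₊, fun n hn => ?_⟩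
      rw [hx n, clamp_self]
      exact le_trans (Nat.le_ceil _) (Nat.cast_le.2 hn)
    exact Filter.Tendsto.congr' hev tendsto_const_nhds

lemma gseq_exp_tendsto (hac : lam ≪ mu) :
    Filter.Tendsto (fun n => ∫ x, Real.exp (gseq lam mu n x) ∂mu) Filter.atTop
      (nhds 1) := by
  have key : Filter.Tendsto (fun n => ∫ x, Real.exp (gseq lam mu n x) ∂mu) Filter.atTop
      (nhds (∫ x, (lam.rnDeriv mu x).toReal ∂mu)) := by
    refine tendsto_integral_of_dominated_convergence
      (fun x => (lam.rnDeriv mu x).toReal + 1)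
      (fun n => ((gseq_measurable lam mu n).exp).aestronglyMeasurable)
      ((Measure.integrable_toReal_rnDeriv).add (integrable_const 1)) ?_ ?_
    · intro n
      filter_upwards [gseq_exp_le lam mu n] with x hx
      rw [Real.norm_eq_abs, abs_of_pos (Real.exp_pos _)]
      exact hx
    · filter_upwards [Measure.rnDeriv_lt_top lam mu] with x hx
      set r := (lam.rnDeriv mu x).toReal with hr
      by_cases h : lam.rnDeriv mu x = 0
      · have hgeq : ∀ n : ℕ, Real.exp (gseq lam mu n x) = Real.exp (-(n:ℝ)) := by
          intro n; rw [gseq, if_pos h]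
        have hr0 : r = 0 := by rw [hr, h]; simp
        rw [hr0]
        refine Filter.Tendsto.congr (fun n => (hgeq n).symm) ?_
        have : Filter.Tendsto (fun n : ℕ => Real.exp (-(n:ℝ))) Filter.atTop (nhds 0) := by
          have h2 : ∀ n : ℕ, Real.exp (-(n:ℝ)) = Real.exp (-1) ^ n := by
            intro n
            rw [← Real.exp_nat_mul]
            ring_nf
          rw [funext h2]
          exact tendsto_pow_atTop_nhds_zero_of_lt_one (Real.exp_pos _).le
            (Real.exp_lt_one_iff.2 (by norm_num))
        exact this
      · have hrpos : 0 < r := ENNReal.toReal_pos h hx.ne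
        have hev : ∀ᶠ n in Filter.atTop, r = Real.exp (gseq lam mu n x) := by
          rw [Filter.eventually_atTop]
          refine ⟨⌈|llr lam mu x|⌉₊, fun n hn => ?_⟩
          rw [gseq, if_neg h, clamp_self (le_trans (Nat.le_ceil _) (Nat.cast_le.2 hn)),
            llr, Real.exp_log hrpos]
        exact Filter.Tendsto.congr' hev tendsto_const_nhds
  have h1 : ∫ x, (lam.rnDeriv mu x).toReal ∂mu = 1 := by
    rw [Measure.integral_toReal_rnDeriv hac]; simp
  rwa [h1] at key

lemma gseq_log_tendsto (hac : lam ≪ mu) :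
    Filter.Tendsto (fun n => Real.log (∫ x, Real.exp (gseq lam mu n x) ∂mu)) Filter.atTop
      (nhds 0) := by
  have := (Real.continuousAt_log (by norm_num : (1:ℝ) ≠ 0)).tendsto.comp
    (gseq_exp_tendsto lam mu hac)
  simpa [Function.comp_def] using this

lemma neg_mul_log_le_inv_e {r : ℝ} (hr : 0 ≤ r) : |r * min (Real.log r) 0| ≤ Real.exp (-1) := by
  rcases eq_or_lt_of_le hr with h | hrpos
  · rw [← h]; simp; positivity
  · rcases le_total 1 r with h1 | h1
    · have : min (Real.log r) 0 = 0 := min_eq_right (Real.log_nonneg h1)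
      rw [this]
      simp
      positivity
    · have hlog : Real.log r ≤ 0 := Real.log_nonpos hr h1
      have hmin : min (Real.log r) 0 = Real.log r := min_eq_left hlog
      rw [hmin, abs_of_nonpos (mul_nonpos_of_nonneg_of_nonpos hr hlog)]
      -- -(r * log r) = r * log (1/r) ≤ exp (-1)
      have hkey : Real.log (1/r) ≤ (1/r) * Real.exp (-1) := by
        have h2 := Real.log_le_sub_one_of_pos
          (x := (1/r) * Real.exp (-1)) (by positivity)
        have h3 : Real.log ((1/r) * Real.exp (-1)) = Real.log (1/r) + (-1) := by
          rw [Real.log_mul (by positivity) (Real.exp_pos _).ne', Real.log_exp]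
        nlinarith [h2, h3]
      have h4 : Real.log (1/r) = -Real.log r := by
        rw [one_div, Real.log_inv]
      rw [h4] at hkey
      have h5 := mul_le_mul_of_nonneg_left hkey hr
      have h6 : r * ((1/r) * Real.exp (-1)) = Real.exp (-1) := by
        field_simp
      nlinarith [h5, h6]

lemma llr_min_zero_integrable (hac : lam ≪ mu) :
    Integrable (fun x => min (llr lam mu x) 0) lam := by
  rw [← MeasureTheory.integrable_rnDeriv_smul_iff hac]
  refine integrable_of_bdd ?_ (M := Real.exp (-1)) ?_
  · exact (Measure.measurable_rnDeriv lam mu).ennreal_toReal.smul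
      ((measurable_llr _ _).min measurable_const)
  · intro x
    have := neg_mul_log_le_inv_e (r := (lam.rnDeriv mu x).toReal) ENNReal.toReal_nonneg
    simpa [llr, smul_eq_mul] using this

lemma gseq_integral_unbounded (hac : lam ≪ mu) (hnint : ¬ Integrable (llr lam mu) lam) :
    ∀ C : ℝ, ∃ n : ℕ, C ≤ ∫ x, gseq lam mu n x ∂lam := by
  intro C
  by_contra hcon
  push_neg at hcon
  set h : ℕ → α → ℝ := fun n x => min (llr lam mu x) (n : ℝ) with hh
  have hmeas : ∀ n, Measurable (h n) := fun n => (measurable_llr _ _).min measurable_const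
  have hint : ∀ n, Integrable (h n) lam := by
    intro n
    refine Integrable.mono' ((llr_min_zero_integrable lam mu hac).abs.add
      (integrable_const (n : ℝ))) (hmeas n).aestronglyMeasurable
      (Filter.Eventually.of_forall fun x => ?_)
    show ‖h n x‖ ≤ |min (llr lam mu x) 0| + (n:ℝ)
    rw [Real.norm_eq_abs, abs_le]
    constructor
    · have h1 : min (llr lam mu x) 0 ≤ h n x := by
        rw [hh]
        exact min_le_min le_rfl (Nat.cast_nonneg n)
      have h2 : -|min (llr lam mu x) 0| ≤ min (llr lam mu x) 0 := neg_abs_le _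
      have h3 : (0:ℝ) ≤ n := Nat.cast_nonneg n
      linarith
    · have h1 : h n x ≤ (n : ℝ) := min_le_right _ _
      have h2 : (0:ℝ) ≤ |min (llr lam mu x) 0| := abs_nonneg _
      linarith
  -- each ∫ h n ≤ ∫ gseq n < C
  have hle : ∀ n, ∫ x, h n x ∂lam < C := by
    intro n
    refine lt_of_le_of_lt ?_ (hcon n)
    refine integral_mono_ae (hint n) ?_ ?_
    · exact integrable_of_bdd (gseq_measurable lam mu n) (gseq_abs_le lam mu n)
    · filter_upwards [gseq_ae_eq lam mu hac n] with x hx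
      rw [hx]
      show min (llr lam mu x) (n:ℝ) ≤ max (min (llr lam mu x) (n:ℝ)) (-(n:ℝ))
      exact le_max_left _ _
  -- monotone convergence contradiction: llr would be integrable
  have hmono : ∀ x, Monotone fun n : ℕ => h n x := by
    intro x m n hmn
    exact min_le_min le_rfl (Nat.cast_le.2 hmn)
  have h0le : ∀ n x, h 0 x ≤ h n x := fun n x => hmono x (Nat.zero_le n)
  set Fn : ℕ → α → ℝ≥0∞ := fun n x => ENNReal.ofReal (h n x - h 0 x) with hFn
  have hFnmeas : ∀ n, Measurable (Fn n) := fun n =>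
    ((hmeas n).sub (hmeas 0)).ennreal_ofReal
  have hFnmono : Monotone Fn := by
    intro m n hmn x
    exact ENNReal.ofReal_le_ofReal (by linarith [hmono x hmn])
  have hsup : ∀ x, (⨆ n, Fn n x) = ENNReal.ofReal (llr lam mu x - h 0 x) := by
    intro x
    refine iSup_eq_of_tendsto (fun m n hmn => hFnmono hmn x) ?_
    have htend : Filter.Tendsto (fun n => h n x - h 0 x) Filter.atTop
        (nhds (llr lam mu x - h 0 x)) := by
      refine Filter.Tendsto.sub_const ?_ _
      have hev : ∀ᶠ n in Filter.atTop, llr lam mu x = h n x := by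
        rw [Filter.eventually_atTop]
        refine ⟨⌈|llr lam mu x|⌉₊, fun n hn => ?_⟩
        rw [hh]
        exact (min_eq_left (le_trans (le_abs_self _)
          (le_trans (Nat.le_ceil _) (Nat.cast_le.2 hn)))).symm
      exact Filter.Tendsto.congr' hev tendsto_const_nhds
    exact (ENNReal.continuous_ofReal.tendsto _).comp htend
  have hlint : ∫⁻ x, ENNReal.ofReal (llr lam mu x - h 0 x) ∂lam
      ≤ ENNReal.ofReal (C + |∫ x, h 0 x ∂lam|) := by
    have := lintegral_iSup (μ := lam) hFnmeas hFnmono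
    calc ∫⁻ x, ENNReal.ofReal (llr lam mu x - h 0 x) ∂lam
        = ∫⁻ x, ⨆ n, Fn n x ∂lam := by
          refine lintegral_congr fun x => (hsup x).symm
    _ = ⨆ n, ∫⁻ x, Fn n x ∂lam := this
    _ ≤ ENNReal.ofReal (C + |∫ x, h 0 x ∂lam|) := by
        refine iSup_le fun n => ?_
        have hsubint : Integrable (fun x => h n x - h 0 x) lam := (hint n).sub (hint 0)
        have heq : ∫⁻ x, Fn n x ∂lam = ENNReal.ofReal (∫ x, (h n x - h 0 x) ∂lam) := by
          show ∫⁻ x, ENNReal.ofReal (h n x - h 0 x) ∂lam = _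
          rw [← ofReal_integral_eq_lintegral_ofReal hsubint
            (Filter.Eventually.of_forall fun x => by simp [h0le n x])]
        rw [heq]
        refine ENNReal.ofReal_le_ofReal ?_
        rw [integral_sub (hint n) (hint 0)]
        have := hle n
        have h2 : -|∫ x, h 0 x ∂lam| ≤ ∫ x, h 0 x ∂lam := neg_abs_le _
        linarith
  have hdiff_int : Integrable (fun x => llr lam mu x - h 0 x) lam := by
    have hnn : ∀ x, 0 ≤ llr lam mu x - h 0 x := by
      intro x
      rw [hh]
      simp only [Nat.cast_zero]
      linarith [min_le_left (llr lam mu x) (0:ℝ)]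
    refine ⟨((measurable_llr _ _).sub (hmeas 0)).aestronglyMeasurable, ?_⟩
    rw [hasFiniteIntegral_iff_norm]
    calc ∫⁻ x, ENNReal.ofReal ‖llr lam mu x - h 0 x‖ ∂lam
        = ∫⁻ x, ENNReal.ofReal (llr lam mu x - h 0 x) ∂lam := by
          refine lintegral_congr fun x => ?_
          rw [Real.norm_eq_abs, abs_of_nonneg (by
            rw [hh]; simp only [Nat.cast_zero]; linarith [min_le_left (llr lam mu x) (0:ℝ)])]
    _ ≤ ENNReal.ofReal (C + |∫ x, h 0 x ∂lam|) := hlint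
    _ < ⊤ := ENNReal.ofReal_lt_top
  have : Integrable (llr lam mu) lam := by
    have h1 : Integrable (h 0) lam := hint 0
    have := hdiff_int.add h1
    refine this.congr (Filter.Eventually.of_forall fun x => ?_)
    simp
  exact hnint this

end LowerAbstract

section Setting

variable {E F : Type*}
    [TopologicalSpace E] [PolishSpace E] [MeasurableSpace E] [BorelSpace E]
    [TopologicalSpace F] [PolishSpace F] [MeasurableSpace F] [BorelSpace F]
    (ν : Measure F) [IsProbabilityMeasure ν]
    (ρ : Kernel F E) [IsMarkovKernel ρ]

lemma mu_prob : IsProbabilityMeasure ((ν.compProd ρ).map Prod.swap) :=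
  Measure.isProbabilityMeasure_map measurable_swap.aemeasurable

lemma integral_mu {f : E × F → ℝ} (hf : Measurable f) {M : ℝ} (hb : ∀ p, |f p| ≤ M) :
    ∫ p, f p ∂((ν.compProd ρ).map Prod.swap) = ∫ u, ∫ x, f (x, u) ∂(ρ u) ∂ν := by
  rw [integral_map measurable_swap.aemeasurable hf.aestronglyMeasurable]
  have hint : Integrable (fun q => f q.swap) (ν.compProd ρ) :=
    integrable_of_bdd (hf.comp measurable_swap) (fun q => hb q.swap)
  rw [MeasureTheory.Measure.integral_compProd hint]
  rfl

lemma measurable_Z {g : E × F → ℝ} (hg : Measurable g) :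
    Measurable fun u => ∫ x, g (x, u) ∂(ρ u) := by
  have : StronglyMeasurable fun q : F × E => g (q.2, q.1) :=
    (hg.comp (measurable_snd.prodMk measurable_fst)).stronglyMeasurable
  exact this.integral_kernel_prod_right'.measurable

lemma Z_bounds {φ : E × F → ℝ} (hφ : Measurable φ) {M : ℝ} (hb : ∀ p, |φ p| ≤ M)
    (u : F) :
    Real.exp (-M) ≤ ∫ x, Real.exp (φ (x, u)) ∂(ρ u)
      ∧ ∫ x, Real.exp (φ (x, u)) ∂(ρ u) ≤ Real.exp M := by
  have hmeas : Measurable fun x => Real.exp (φ (x, u)) :=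
    (hφ.comp (measurable_id.prodMk measurable_const)).exp
  have hint : Integrable (fun x => Real.exp (φ (x, u))) (ρ u) := by
    refine integrable_of_bdd hmeas (M := Real.exp M) fun x => ?_
    rw [abs_of_pos (Real.exp_pos _)]
    exact Real.exp_le_exp.2 (abs_le.1 (hb _)).2
  have h1 : ∫ _x : E, Real.exp (-M) ∂(ρ u) ≤ ∫ x, Real.exp (φ (x, u)) ∂(ρ u) :=
    integral_mono (integrable_const _) hint fun x => Real.exp_le_exp.2 (abs_le.1 (hb _)).1
  have h2 : ∫ x, Real.exp (φ (x, u)) ∂(ρ u) ≤ ∫ _x : E, Real.exp M ∂(ρ u) :=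
    integral_mono hint (integrable_const _) fun x => Real.exp_le_exp.2 (abs_le.1 (hb _)).2
  simp only [integral_const, measure_univ, ENNReal.toReal_one, probReal_univ, one_smul] at h1 h2
  exact ⟨h1, h2⟩

/-- Baby Jensen for the logarithm, via the tangent line at `c`. -/
lemma integral_log_le {w : F → ℝ} (hw : Measurable w) {a b : ℝ} (ha : 0 < a)
    (hab : ∀ u, a ≤ w u ∧ w u ≤ b) :
    ∫ u, Real.log (w u) ∂ν ≤ Real.log (∫ u, w u ∂ν) := by
  have hwint : Integrable w ν := by
    refine integrable_of_bdd hw (M := max |a| |b|) fun u => ?_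
    rw [abs_of_pos (lt_of_lt_of_le ha (hab u).1)]
    exact le_trans (hab u).2 (le_trans (le_abs_self b) (le_max_right _ _))
  have hc : a ≤ ∫ u, w u ∂ν := by
    have := integral_mono (integrable_const a) hwint fun u => (hab u).1
    simpa using this
  have hcpos : 0 < ∫ u, w u ∂ν := lt_of_lt_of_le ha hc
  set c := ∫ u, w u ∂ν with hcdef
  have hlogint : Integrable (fun u => Real.log (w u)) ν := by
    refine integrable_of_bdd (hw.log) (M := max |Real.log a| |Real.log b|) fun u => ?_
    rcases hab u with ⟨h1, h2⟩
    have hwu : 0 < w u := lt_of_lt_of_le ha h1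
    rw [abs_le]
    refine ⟨le_trans ?_ (Real.log_le_log ha h1), le_trans (Real.log_le_log hwu h2) ?_⟩
    · exact le_trans (neg_le_neg (le_max_left _ _)) (neg_abs_le _)
    · exact le_trans (le_abs_self _) (le_max_right _ _)
  have hpt : ∀ u, Real.log (w u) ≤ w u / c - 1 + Real.log c := by
    intro u
    have hwu : 0 < w u := lt_of_lt_of_le ha (hab u).1
    have := Real.log_le_sub_one_of_pos (x := w u / c) (by positivity)
    rw [Real.log_div hwu.ne' hcpos.ne'] at this
    linarith
  have hmono : ∫ u, Real.log (w u) ∂ν ≤ ∫ u, (w u / c - 1 + Real.log c) ∂ν :=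
    integral_mono hlogint
      (((hwint.div_const c).sub (integrable_const 1)).add (integrable_const _)) hpt
  have Isub : Integrable (fun u => w u / c - 1) ν := (hwint.div_const c).sub (integrable_const 1)
  have hsplit : ∫ u, (w u / c - 1 + Real.log c) ∂ν = c / c - 1 + Real.log c := by
    rw [integral_add Isub (integrable_const _),
      integral_sub (hwint.div_const c) (integrable_const 1), integral_div]
    simp
    rfl
  rw [hsplit] at hmono
  have : c / c = 1 := div_self hcpos.ne'
  linarith

variable (lam : Measure (E × F)) [IsProbabilityMeasure lam]

lemma upper_bound (hm : lam.map Prod.snd = ν)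
    (hac : lam ≪ (ν.compProd ρ).map Prod.swap)
    (hint : Integrable (llr lam ((ν.compProd ρ).map Prod.swap)) lam)
    (φ : BoundedContinuousFunction (E × F) ℝ) :
    ∫ p, φ p ∂lam - ∫ u, Real.log (∫ x, Real.exp (φ (x, u)) ∂(ρ u)) ∂ν
      ≤ ∫ p, llr lam ((ν.compProd ρ).map Prod.swap) p ∂lam := by
  haveI := mu_prob ν ρ
  set mu := (ν.compProd ρ).map Prod.swap with hmu
  set M := ‖φ‖ with hM
  have hφm : Measurable (φ : E × F → ℝ) := φ.continuous.measurable
  have hφb : ∀ p, |(φ : E × F → ℝ) p| ≤ M := fun p => by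
    have := φ.norm_coe_le_norm p
    simpa [Real.norm_eq_abs] using this
  set Z : F → ℝ := fun u => ∫ x, Real.exp (φ (x, u)) ∂(ρ u) with hZ
  have hZm : Measurable Z := measurable_Z ρ (hφm.exp)
  have hZlb : ∀ u, Real.exp (-M) ≤ Z u := fun u => (Z_bounds ρ hφm hφb u).1
  have hZub : ∀ u, Z u ≤ Real.exp M := fun u => (Z_bounds ρ hφm hφb u).2
  have hZpos : ∀ u, 0 < Z u := fun u => lt_of_lt_of_le (Real.exp_pos _) (hZlb u)
  have hlogZb : ∀ u, |Real.log (Z u)| ≤ M := by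
    intro u
    rw [abs_le]
    constructor
    · have := Real.log_le_log (Real.exp_pos (-M)) (hZlb u)
      rwa [Real.log_exp] at this
    · have := Real.log_le_log (hZpos u) (hZub u)
      rwa [Real.log_exp] at this
  set ψ : E × F → ℝ := fun p => φ p - Real.log (Z p.2) with hψ
  have hψm : Measurable ψ := hφm.sub ((hZm.comp measurable_snd).log)
  have hψb : ∀ p, |ψ p| ≤ 2 * M := by
    intro p
    calc |φ p - Real.log (Z p.2)| ≤ |φ p| + |Real.log (Z p.2)| := abs_sub _ _
    _ ≤ M + M := add_le_add (hφb p) (hlogZb p.2)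
    _ = 2 * M := by ring
  have hexp : ∫ p, Real.exp (ψ p) ∂mu ≤ 1 := by
    have heq : ∀ p : E × F, Real.exp (ψ p) = Real.exp (φ p) / Z p.2 := by
      intro p
      rw [hψ, Real.exp_sub, Real.exp_log (hZpos p.2)]
    have hb' : ∀ p : E × F, |Real.exp (φ p) / Z p.2| ≤ Real.exp (2 * M) := by
      intro p
      rw [abs_of_pos (div_pos (Real.exp_pos _) (hZpos p.2))]
      have h1 : Real.exp (φ p) ≤ Real.exp M := Real.exp_le_exp.2 (abs_le.1 (hφb p)).2
      have h2 : Real.exp (-M) ≤ Z p.2 := hZlb p.2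
      calc Real.exp (φ p) / Z p.2 ≤ Real.exp M / Real.exp (-M) :=
        div_le_div₀ (Real.exp_pos M).le h1 (Real.exp_pos (-M)) h2
      _ = Real.exp (2 * M) := by rw [← Real.exp_sub]; ring_nf
    calc ∫ p, Real.exp (ψ p) ∂mu = ∫ p, Real.exp (φ p) / Z p.2 ∂mu := by
          exact integral_congr_ae (Filter.Eventually.of_forall heq)
    _ = ∫ u, ∫ x, Real.exp (φ (x, u)) / Z u ∂(ρ u) ∂ν :=
          integral_mu ν ρ ((hφm.exp).div (hZm.comp measurable_snd)) hb'
    _ = ∫ u, (1 : ℝ) ∂ν := by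
          refine integral_congr_ae (Filter.Eventually.of_forall fun u => ?_)
          show (∫ x, Real.exp (φ (x, u)) / Z u ∂(ρ u)) = 1
          rw [integral_div, div_self (hZpos u).ne']
    _ ≤ 1 := by simp
  have hgibbs := gibbs_ineq lam mu hac hint hψm hψb hexp
  have hψint : ∫ p, ψ p ∂lam
      = ∫ p, φ p ∂lam - ∫ u, Real.log (Z u) ∂ν := by
    have hφint : Integrable (φ : E × F → ℝ) lam := integrable_of_bdd hφm hφb
    have hlogint : Integrable (fun p : E × F => Real.log (Z p.2)) lam :=
      integrable_of_bdd ((hZm.comp measurable_snd).log) fun p => hlogZb p.2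
    rw [hψ]
    rw [integral_sub hφint hlogint]
    congr 1
    rw [← hm, integral_map measurable_snd.aemeasurable (hZm.log).aestronglyMeasurable]
  rw [hψint] at hgibbs
  linarith [hgibbs]

lemma abs_exp_sub_exp_le {a b M : ℝ} (ha : |a| ≤ M) (hb : |b| ≤ M) :
    |Real.exp a - Real.exp b| ≤ Real.exp M * |a - b| := by
  have key : ∀ x y : ℝ, |x| ≤ M → |y| ≤ M → Real.exp x - Real.exp y ≤ Real.exp M * |x - y| := by
    intro x y hx hy
    have h1 : (x - y) + 1 ≤ Real.exp (x - y) := Real.add_one_le_exp _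
    have h2 : Real.exp (x - y) = Real.exp x / Real.exp y := Real.exp_sub _ _
    have h3 : Real.exp x - Real.exp y ≤ (x - y) * Real.exp x := by
      have h4 := Real.add_one_le_exp (y - x)
      have h5 : Real.exp (y - x) = Real.exp y / Real.exp x := Real.exp_sub _ _
      have h6 : ((y - x) + 1) * Real.exp x ≤ Real.exp y := by
        rw [h5] at h4
        have := mul_le_mul_of_nonneg_right h4 (Real.exp_pos x).le
        rwa [div_mul_cancel₀ _ (Real.exp_pos x).ne'] at this
      nlinarith [Real.exp_pos x]
    have h7 : Real.exp x ≤ Real.exp M := Real.exp_le_exp.2 (abs_le.1 hx).2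
    calc Real.exp x - Real.exp y ≤ (x - y) * Real.exp x := h3
    _ ≤ |x - y| * Real.exp x := mul_le_mul_of_nonneg_right (le_abs_self _) (Real.exp_pos x).le
    _ ≤ |x - y| * Real.exp M := mul_le_mul_of_nonneg_left h7 (abs_nonneg _)
    _ = Real.exp M * |x - y| := mul_comm _ _
  rw [abs_sub_le_iff]
  constructor
  · exact key a b ha hb
  · have := key b a hb ha
    rwa [abs_sub_comm] at this


lemma approx_lemma {ψ : E × F → ℝ} (hψ : Measurable ψ) {M : ℝ} (hM : 0 ≤ M)
    (hb : ∀ p, |ψ p| ≤ M) {ε : ℝ} (hε : 0 < ε) :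
    ∃ φ : BoundedContinuousFunction (E × F) ℝ,
      ∫ p, ψ p ∂lam - Real.log (∫ p, Real.exp (ψ p) ∂((ν.compProd ρ).map Prod.swap)) - ε
        ≤ ∫ p, φ p ∂lam - ∫ u, Real.log (∫ x, Real.exp (φ (x, u)) ∂(ρ u)) ∂ν := by
  haveI := mu_prob ν ρ
  set mu := (ν.compProd ρ).map Prod.swap with hmu
  set δ := ε / (1 + Real.exp (2 * M)) with hδdef
  have hδ : 0 < δ := by positivity
  set κ := lam + mu with hκ
  have hψintκ : Integrable ψ κ := integrable_of_bdd hψ hb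
  have hnormal : NormalSpace (E × F) := by
    letI := TopologicalSpace.upgradeIsCompletelyMetrizable (E × F)
    infer_instance
  obtain ⟨φ₀, hφ₀, hφ₀int⟩ := hψintκ.exists_boundedContinuous_integral_sub_le hδ
  set φ : BoundedContinuousFunction (E × F) ℝ :=
    BoundedContinuousFunction.ofNormedAddCommGroup
      (fun p => max (min (φ₀ p) M) (-M))
      (((φ₀.continuous.min continuous_const).max continuous_const)) M
      (fun p => by simpa [Real.norm_eq_abs] using clamp_abs_le (t := φ₀ p) hM) with hφdef
  have hφeq : ∀ p, φ p = max (min (φ₀ p) M) (-M) := fun p => rfl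
  have hφm : Measurable (φ : E × F → ℝ) := φ.continuous.measurable
  have hφb : ∀ p, |(φ : E × F → ℝ) p| ≤ M := fun p => by
    rw [hφeq]; exact clamp_abs_le hM
  have hdist : ∀ p, |ψ p - φ p| ≤ |ψ p - φ₀ p| := by
    intro p
    rw [hφeq]
    conv_lhs => rw [← clamp_self (hb p)]
    exact clamp_sub_le _ _ _
  have hnormκ : Integrable (fun p => |ψ p - φ₀ p|) κ := (hψintκ.sub hφ₀int).abs
  have hnorm_lam : Integrable (fun p => |ψ p - φ₀ p|) lam :=
    hnormκ.left_of_add_measure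
  have hnorm_mu : Integrable (fun p => |ψ p - φ₀ p|) mu :=
    hnormκ.right_of_add_measure
  have hκsplit : ∫ p, |ψ p - φ₀ p| ∂lam + ∫ p, |ψ p - φ₀ p| ∂mu ≤ δ := by
    have := integral_add_measure hnorm_lam hnorm_mu
    have h2 : ∫ p, ‖ψ p - φ₀ p‖ ∂κ ≤ δ := hφ₀
    simp only [Real.norm_eq_abs] at h2
    rw [hκ] at *
    linarith [this ▸ h2]
  have hIlam : ∫ p, |ψ p - φ₀ p| ∂lam ≤ δ := by
    have h2 : 0 ≤ ∫ p, |ψ p - φ₀ p| ∂mu := integral_nonneg fun p => abs_nonneg _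
    linarith
  have hImu : ∫ p, |ψ p - φ₀ p| ∂mu ≤ δ := by
    have h2 : 0 ≤ ∫ p, |ψ p - φ₀ p| ∂lam := integral_nonneg fun p => abs_nonneg _
    linarith
  -- step A : lam-integrals are close
  have hψint_lam : Integrable ψ lam := integrable_of_bdd hψ hb
  have hφint_lam : Integrable (φ : E × F → ℝ) lam := integrable_of_bdd hφm hφb
  have hA : ∫ p, ψ p ∂lam - δ ≤ ∫ p, φ p ∂lam := by
    have h1 : ∫ p, ψ p ∂lam - ∫ p, φ p ∂lam = ∫ p, (ψ p - φ p) ∂lam :=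
      (integral_sub hψint_lam hφint_lam).symm
    have h2 : ∫ p, (ψ p - φ p) ∂lam ≤ ∫ p, |ψ p - φ p| ∂lam :=
      integral_mono (hψint_lam.sub hφint_lam)
        ((hψint_lam.sub hφint_lam).abs) (fun p => le_abs_self _)
    have h3 : ∫ p, |ψ p - φ p| ∂lam ≤ ∫ p, |ψ p - φ₀ p| ∂lam :=
      integral_mono ((hψint_lam.sub hφint_lam).abs) hnorm_lam hdist
    linarith
  -- step B : control of the log-partition term
  set Z : F → ℝ := fun u => ∫ x, Real.exp (φ (x, u)) ∂(ρ u) with hZ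
  have hZm : Measurable Z := measurable_Z ρ (hφm.exp)
  have hZbdd : ∀ u, Real.exp (-M) ≤ Z u ∧ Z u ≤ Real.exp M := fun u =>
    Z_bounds ρ hφm hφb u
  have hjensen : ∫ u, Real.log (Z u) ∂ν ≤ Real.log (∫ u, Z u ∂ν) :=
    integral_log_le ν hZm (Real.exp_pos (-M)) hZbdd
  have hZint : ∫ u, Z u ∂ν = ∫ p, Real.exp (φ p) ∂mu := by
    rw [hmu]
    rw [integral_mu ν ρ (hφm.exp) (M := Real.exp M)
      (fun p => by
        rw [abs_of_pos (Real.exp_pos _)]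
        exact Real.exp_le_exp.2 (abs_le.1 (hφb p)).2)]
  have hexpψ_int : Integrable (fun p => Real.exp (ψ p)) mu := by
    refine integrable_of_bdd hψ.exp (M := Real.exp M) fun p => ?_
    rw [abs_of_pos (Real.exp_pos _)]
    exact Real.exp_le_exp.2 (abs_le.1 (hb p)).2
  have hexpφ_int : Integrable (fun p => Real.exp (φ p)) mu := by
    refine integrable_of_bdd hφm.exp (M := Real.exp M) fun p => ?_
    rw [abs_of_pos (Real.exp_pos _)]
    exact Real.exp_le_exp.2 (abs_le.1 (hφb p)).2
  have hexp_close : ∫ p, Real.exp (φ p) ∂mu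
      ≤ ∫ p, Real.exp (ψ p) ∂mu + Real.exp M * δ := by
    have h1 : ∫ p, Real.exp (φ p) ∂mu - ∫ p, Real.exp (ψ p) ∂mu
        = ∫ p, (Real.exp (φ p) - Real.exp (ψ p)) ∂mu :=
      (integral_sub hexpφ_int hexpψ_int).symm
    have h2 : ∫ p, (Real.exp (φ p) - Real.exp (ψ p)) ∂mu
        ≤ ∫ p, Real.exp M * |ψ p - φ₀ p| ∂mu := by
      refine integral_mono (hexpφ_int.sub hexpψ_int) (hnorm_mu.const_mul _) fun p => ?_
      have h3 := abs_exp_sub_exp_le (hφb p) (hb p)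
      have h4 : |φ p - ψ p| ≤ |ψ p - φ₀ p| := by
        rw [abs_sub_comm]; exact hdist p
      have h5 := (abs_le.1 h3).2
      have h6 : Real.exp M * |φ p - ψ p| ≤ Real.exp M * |ψ p - φ₀ p| :=
        mul_le_mul_of_nonneg_left h4 (Real.exp_pos M).le
      calc Real.exp (φ p) - Real.exp (ψ p) ≤ |Real.exp (φ p) - Real.exp (ψ p)| :=
        le_abs_self _
      _ ≤ Real.exp M * |φ p - ψ p| := h3
      _ ≤ Real.exp M * |ψ p - φ₀ p| := h6
    have h7 : ∫ p, Real.exp M * |ψ p - φ₀ p| ∂mu ≤ Real.exp M * δ := by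
      rw [integral_const_mul]
      exact mul_le_mul_of_nonneg_left hImu (Real.exp_pos M).le
    linarith
  have hψlb : Real.exp (-M) ≤ ∫ p, Real.exp (ψ p) ∂mu := by
    have := integral_mono (integrable_const (Real.exp (-M))) hexpψ_int
      (fun p => Real.exp_le_exp.2 (abs_le.1 (hb p)).1)
    simpa using this
  have hψpos : 0 < ∫ p, Real.exp (ψ p) ∂mu := lt_of_lt_of_le (Real.exp_pos _) hψlb
  set A := ∫ p, Real.exp (ψ p) ∂mu with hA'
  have hlog2 : Real.log (A + Real.exp M * δ) ≤ Real.log A + Real.exp (2 * M) * δ := by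
    have ht : (0:ℝ) ≤ Real.exp M * δ := by positivity
    have h1 : Real.log ((A + Real.exp M * δ) / A) ≤ (A + Real.exp M * δ) / A - 1 :=
      Real.log_le_sub_one_of_pos (by positivity)
    have h2 : Real.log ((A + Real.exp M * δ) / A)
        = Real.log (A + Real.exp M * δ) - Real.log A := by
      rw [Real.log_div (by positivity) hψpos.ne']
    have h3 : (A + Real.exp M * δ) / A - 1 = (Real.exp M * δ) / A := by
      field_simp
      ring
    have h4 : (Real.exp M * δ) / A ≤ (Real.exp M * δ) / Real.exp (-M) :=
      div_le_div_of_nonneg_left ht (Real.exp_pos _) hψlb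
    have h5 : (Real.exp M * δ) / Real.exp (-M) = Real.exp (2 * M) * δ := by
      rw [div_eq_mul_inv, ← Real.exp_neg, mul_right_comm, ← Real.exp_add]
      ring_nf
    linarith
  have hB : ∫ u, Real.log (Z u) ∂ν ≤ Real.log A + Real.exp (2 * M) * δ := by
    have h1 : Real.log (∫ u, Z u ∂ν) ≤ Real.log (A + Real.exp M * δ) := by
      apply Real.log_le_log
      · rw [hZint]
        exact lt_of_lt_of_le (by positivity : (0:ℝ) < Real.exp (-M)) (by
          have := integral_mono (integrable_const (Real.exp (-M))) hexpφ_int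
            (fun p => Real.exp_le_exp.2 (abs_le.1 (hφb p)).1)
          simpa using this)
      · rw [hZint]; exact hexp_close
    linarith
  refine ⟨φ, ?_⟩
  have hδε : δ * (1 + Real.exp (2 * M)) = ε := by
    rw [hδdef]; field_simp
  have final : ∫ p, ψ p ∂lam - Real.log A - ε
      ≤ ∫ p, φ p ∂lam - ∫ u, Real.log (Z u) ∂ν := by
    nlinarith [hA, hB]
  exact final

end Setting



lemma EReal_iSup_top {ι : Type*} [Nonempty ι] {f : ι → ℝ}
    (h : ∀ C : ℝ, ∃ i, C ≤ f i) : (⨆ i, ((f i : ℝ) : EReal)) = ⊤ := by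
  refine eq_top_iff.2 (le_of_forall_lt fun c hc => ?_)
  induction c using EReal.rec with
  | bot =>
      obtain ⟨i, _⟩ := h 0
      exact lt_of_lt_of_le (EReal.bot_lt_coe (f i)) (le_iSup (fun j => ((f j : ℝ) : EReal)) i)
  | coe x =>
      obtain ⟨i, hi⟩ := h (x + 1)
      refine lt_of_lt_of_le ?_ (le_iSup (fun j => ((f j : ℝ) : EReal)) i)
      exact_mod_cast (by linarith : x < f i)
  | top => exact absurd hc (lt_irrefl _)

lemma EReal_le_iSup_approx {ι : Type*} {f : ι → ℝ} (a : ℝ)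
    (h : ∀ ε : ℝ, 0 < ε → ∃ i, a - ε ≤ f i) :
    (a : EReal) ≤ ⨆ i, ((f i : ℝ) : EReal) := by
  refine le_of_forall_lt fun c hc => ?_
  induction c using EReal.rec with
  | bot =>
      obtain ⟨i, _⟩ := h 1 one_pos
      exact lt_of_lt_of_le (EReal.bot_lt_coe (f i)) (le_iSup (fun j => ((f j : ℝ) : EReal)) i)
  | coe x =>
      have hx : x < a := by exact_mod_cast hc
      obtain ⟨i, hi⟩ := h ((a - x) / 2) (by linarith)
      refine lt_of_lt_of_le ?_ (le_iSup (fun j => ((f j : ℝ) : EReal)) i)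
      exact_mod_cast (by linarith : x < f i)
  | top => exact absurd hc (EReal.coe_lt_top a).asymm


open Classical in
noncomputable def relEnt {E : Type*} [MeasurableSpace E] (ν ν' : Measure E) : EReal :=
  if ν ≪ ν' ∧ Integrable (llr ν ν') ν then ((∫ x, llr ν ν' x ∂ν : ℝ) : EReal) else ⊤

/-- Identification of the Legendre transform `Λ*` of
`Λ(φ) = ∫ log ∫ e^{φ(x,u)} ρ^u(dx) ν(du)` with the relative entropy
`H(λ | ρ^u × ν)` when the second marginal of `λ` is `ν`, and `+∞` otherwise. -/
theorem stmt5 {E F : Type*}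
    [TopologicalSpace E] [PolishSpace E] [MeasurableSpace E] [BorelSpace E]
    [TopologicalSpace F] [PolishSpace F] [MeasurableSpace F] [BorelSpace F]
    (ν : Measure F) [IsProbabilityMeasure ν]
    (ρ : Kernel F E) [IsMarkovKernel ρ]
    (lam : Measure (E × F)) [IsProbabilityMeasure lam] :
    (lam.map Prod.snd = ν →
      (⨆ φ : BoundedContinuousFunction (E × F) ℝ,
        (((∫ p, φ p ∂lam
          - ∫ u, Real.log (∫ x, Real.exp (φ (x, u)) ∂(ρ u)) ∂ν) : ℝ) : EReal))
        = relEnt lam ((ν.compProd ρ).map Prod.swap))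
    ∧ (lam.map Prod.snd ≠ ν →
      (⨆ φ : BoundedContinuousFunction (E × F) ℝ,
        (((∫ p, φ p ∂lam
          - ∫ u, Real.log (∫ x, Real.exp (φ (x, u)) ∂(ρ u)) ∂ν) : ℝ) : EReal)) = ⊤) := by

  haveI := mu_prob ν ρ
  set mu := (ν.compProd ρ).map Prod.swap with hmu
  constructor
  · intro hm
    by_cases hc : lam ≪ mu ∧ Integrable (llr lam mu) lam
    · obtain ⟨hac, hint⟩ := hc
      simp only [relEnt, if_pos (⟨hac, hint⟩ : lam ≪ mu ∧ Integrable (llr lam mu) lam)]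
      apply le_antisymm
      · exact iSup_le fun φ => EReal.coe_le_coe_iff.2 (upper_bound ν ρ lam hm hac hint φ)
      · refine EReal_le_iSup_approx _ fun ε hε => ?_
        set a := ∫ x, llr lam mu x ∂lam with ha
        have hV : Filter.Tendsto (fun n =>
            ∫ x, gseq lam mu n x ∂lam
              - Real.log (∫ x, Real.exp (gseq lam mu n x) ∂mu)) Filter.atTop
            (nhds (a - 0)) :=
          (gseq_integral_tendsto lam mu hac hint).sub (gseq_log_tendsto lam mu hac)
        rw [sub_zero] at hV
        obtain ⟨n, hn⟩ :=
          (hV.eventually (eventually_gt_nhds (by linarith : a - ε / 2 < a))).exists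
        obtain ⟨φ, hφ⟩ := approx_lemma ν ρ lam (gseq_measurable lam mu n)
          (Nat.cast_nonneg n) (gseq_abs_le lam mu n) (half_pos hε)
        exact ⟨φ, by linarith⟩
    · simp only [relEnt, if_neg hc]
      refine EReal_iSup_top fun C => ?_
      by_cases hac : lam ≪ mu
      · have hnint : ¬ Integrable (llr lam mu) lam := fun h => hc ⟨hac, h⟩
        obtain ⟨n, hn⟩ := gseq_integral_unbounded lam mu hac hnint (C + 1 + Real.log 2)
        have hpos : 0 < ∫ x, Real.exp (gseq lam mu n x) ∂mu :=
          lt_of_lt_of_le (Real.exp_pos _) (gseq_exp_integral_pos lam mu n)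
        have hlog : Real.log (∫ x, Real.exp (gseq lam mu n x) ∂mu) ≤ Real.log 2 :=
          Real.log_le_log hpos (gseq_exp_integral_le lam mu hac n)
        obtain ⟨φ, hφ⟩ := approx_lemma ν ρ lam (gseq_measurable lam mu n)
          (Nat.cast_nonneg n) (gseq_abs_le lam mu n) one_pos
        exact ⟨φ, by linarith⟩
      · -- not absolutely continuous
        have hex : ∃ s, mu s = 0 ∧ lam s ≠ 0 := by
          by_contra hcon
          push_neg at hcon
          exact hac fun s hs => hcon s hs
        obtain ⟨s, hs0, hs1⟩ := hex
        set t := toMeasurable mu s with hti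
        have ht_meas : MeasurableSet t := measurableSet_toMeasurable mu s
        have hmut : mu t = 0 := by rw [hti, measure_toMeasurable]; exact hs0
        have hlamt : lam t ≠ 0 := fun h0 =>
          hs1 (measure_mono_null (subset_toMeasurable mu s) h0)
        have htR : 0 < (lam t).toReal :=
          ENNReal.toReal_pos hlamt (measure_ne_top lam t)
        set c := (|C| + 1) / (lam t).toReal with hcdef
        have hc0 : 0 ≤ c := by positivity
        set ψ : E × F → ℝ := t.indicator (fun _ => c) with hψ
        have hψm : Measurable ψ := measurable_const.indicator ht_meas
        have hψb : ∀ p, |ψ p| ≤ c := by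
          intro p
          rw [hψ]
          by_cases hp : p ∈ t
          · rw [Set.indicator_of_mem hp]; rw [abs_of_nonneg hc0]
          · rw [Set.indicator_of_notMem hp]; simpa using hc0
        have hψint : ∫ p, ψ p ∂lam = |C| + 1 := by
          rw [hψ, integral_indicator_const c ht_meas, smul_eq_mul]
          rw [hcdef]
          field_simp
          rfl
        have hψexp : ∫ p, Real.exp (ψ p) ∂mu = 1 := by
          have : (fun p => Real.exp (ψ p)) =ᵐ[mu] fun _ => 1 := by
            filter_upwards [measure_eq_zero_iff_ae_notMem.1 hmut] with p hp
            rw [hψ, Set.indicator_of_notMem hp, Real.exp_zero]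
          rw [integral_congr_ae this]
          simp
        obtain ⟨φ, hφ⟩ := approx_lemma ν ρ lam hψm hc0 hψb one_pos
        refine ⟨φ, ?_⟩
        rw [hψint, hψexp, Real.log_one] at hφ
        have : C ≤ |C| := le_abs_self C
        linarith
  · intro hne
    haveI : IsProbabilityMeasure (lam.map Prod.snd) :=
      Measure.isProbabilityMeasure_map measurable_snd.aemeasurable
    have hFne : Nonempty F := by
      by_contra hno
      rw [not_nonempty_iff] at hno
      have h1 : (ν Set.univ) = 1 := measure_univ
      rw [Set.univ_eq_empty_iff.2 hno, measure_empty] at h1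
      exact zero_ne_one h1
    obtain ⟨u₀⟩ := hFne
    have hex : ∃ f : BoundedContinuousFunction F ℝ≥0,
        ∫⁻ u, f u ∂(lam.map Prod.snd) ≠ ∫⁻ u, f u ∂ν := by
      by_contra hcon
      push_neg at hcon
      exact hne (ext_of_forall_lintegral_eq_of_IsFiniteMeasure hcon)
    obtain ⟨f, hf⟩ := hex
    set g : F → ℝ := fun u => (f u : ℝ) with hg
    have hgcont : Continuous g := NNReal.continuous_coe.comp f.continuous
    have hgnn : ∀ u, 0 ≤ g u := fun u => NNReal.coe_nonneg (f u)
    obtain ⟨Cb, hCb⟩ := Metric.isBounded_iff.1 f.isBounded_range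
    set B := (f u₀ : ℝ) + Cb with hB
    have hgb : ∀ u, g u ≤ B := by
      intro u
      have h1 := hCb (Set.mem_range_self u) (Set.mem_range_self u₀)
      rw [NNReal.dist_eq] at h1
      have h2 := (abs_le.1 h1).2
      rw [hB, hg]
      linarith
    have hlin_fin : ∀ (m : Measure F) [IsProbabilityMeasure m],
        ∫⁻ u, (f u : ℝ≥0∞) ∂m ≠ ⊤ := by
      intro m _
      have h1 : ∫⁻ u, (f u : ℝ≥0∞) ∂m ≤ ∫⁻ _u, ENNReal.ofReal B ∂m := by
        refine lintegral_mono fun u => ?_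
        rw [← ENNReal.ofReal_coe_nnreal]
        exact ENNReal.ofReal_le_ofReal (hgb u)
      refine ne_top_of_le_ne_top ?_ h1
      simp [lintegral_const]
    have hint_eq : ∀ (m : Measure F) [IsProbabilityMeasure m],
        ∫ u, g u ∂m = (∫⁻ u, (f u : ℝ≥0∞) ∂m).toReal := by
      intro m _
      rw [integral_eq_lintegral_of_nonneg_ae (Filter.Eventually.of_forall hgnn)
        hgcont.measurable.aestronglyMeasurable]
      congr 1
      refine lintegral_congr fun u => ?_
      rw [hg]
      exact ENNReal.ofReal_coe_nnreal
    have hd : ∫ u, g u ∂(lam.map Prod.snd) ≠ ∫ u, g u ∂ν := by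
      intro hcon
      rw [hint_eq (lam.map Prod.snd), hint_eq ν] at hcon
      exact hf ((ENNReal.toReal_eq_toReal_iff' (hlin_fin (lam.map Prod.snd)) (hlin_fin ν)).1 hcon)
    set d := ∫ u, g u ∂(lam.map Prod.snd) - ∫ u, g u ∂ν with hd_def
    have hd0 : d ≠ 0 := sub_ne_zero.2 hd
    refine EReal_iSup_top fun C => ?_
    set cc := C / d with hcc
    set φ : BoundedContinuousFunction (E × F) ℝ :=
      BoundedContinuousFunction.ofNormedAddCommGroup (fun p => cc * g p.2)
        (continuous_const.mul (hgcont.comp continuous_snd)) (|cc| * (|B| + 1))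
        (fun p => by
          rw [Real.norm_eq_abs, abs_mul]
          refine mul_le_mul_of_nonneg_left ?_ (abs_nonneg cc)
          rw [abs_of_nonneg (hgnn p.2)]
          have h1 := hgb p.2
          have h2 := le_abs_self B
          linarith) with hφdef
    have hφeq : ∀ p, φ p = cc * g p.2 := fun p => rfl
    refine ⟨φ, ?_⟩
    have h1 : ∫ p, φ p ∂lam = cc * ∫ u, g u ∂(lam.map Prod.snd) := by
      rw [integral_map measurable_snd.aemeasurable hgcont.measurable.aestronglyMeasurable]
      rw [show (fun p : E × F => φ p) = fun p : E × F => cc * g p.2 from funext hφeq]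
      rw [integral_const_mul]
    have h2 : ∫ u, Real.log (∫ x, Real.exp (φ (x, u)) ∂(ρ u)) ∂ν
        = cc * ∫ u, g u ∂ν := by
      have hcong : ∀ u, Real.log (∫ x, Real.exp (φ (x, u)) ∂(ρ u)) = cc * g u := by
        intro u
        have hx : ∀ x : E, Real.exp (φ (x, u)) = Real.exp (cc * g u) := fun x => by
          rw [hφeq]
        rw [integral_congr_ae (Filter.Eventually.of_forall hx)]
        simp [Real.log_exp]
      rw [integral_congr_ae (Filter.Eventually.of_forall hcong), integral_const_mul]
    rw [h1, h2]
    have h3 : cc * ∫ u, g u ∂(lam.map Prod.snd) - cc * ∫ u, g u ∂ν = cc * d := by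
      rw [hd_def]; ring
    rw [h3, hcc, div_mul_cancel₀ _ hd0]
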